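/- Let L be the n×n lower-triangular matrix whose nonzero entries are L_{ji} = ρ_{ij(1,...,i-1)} = (R_{ij} - ρ_i^{*j} R_{i-1}^{-1} ρ_i^T)/sqrt(1 - ρ_i R_{i-1}^{-1} ρ_i^T) for j ≥ i (so in particular L_{ii} = sqrt(1 - ρ_i R_{i-1}^{-1} ρ_i^T) and L_{j1} = R_{1j}). Then L L^T = R, i.e., L is the Cholesky factor of R. -/

import Mathlib

open Matrix

/-- Leading `i × i` principal submatrix. -/
def lead {n : ℕ} (R : Matrix (Fin n) (Fin n) ℝ) (i : ℕ) (h : i ≤ n) :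
    Matrix (Fin i) (Fin i) ℝ :=
  R.submatrix (Fin.castLE h) (Fin.castLE h)

/-- First `i` entries of column `j` of `R`. -/
def colv {n : ℕ} (R : Matrix (Fin n) (Fin n) ℝ) (i : ℕ) (h : i ≤ n) (j : Fin n) :
    Fin i → ℝ :=
  fun k => R (Fin.castLE h k) j


/-- The semi-partial correlation coefficient `ρ_{k+1,j(1,…,k)}` (0-indexed `k`,
0-indexed column `j`):
`(R_{kj} − ρ_k^{*j} R_{k−1}⁻¹ ρ_kᵀ)/√(1 − ρ_k R_{k−1}⁻¹ ρ_kᵀ)`. -/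
noncomputable def spc {n : ℕ} (R : Matrix (Fin n) (Fin n) ℝ) (k : ℕ) (hk : k < n)
    (j : Fin n) : ℝ :=
  (R ⟨k, hk⟩ j - colv R k hk.le j ⬝ᵥ (lead R k hk.le)⁻¹ *ᵥ colv R k hk.le ⟨k, hk⟩) /
    Real.sqrt
      (1 - colv R k hk.le ⟨k, hk⟩ ⬝ᵥ (lead R k hk.le)⁻¹ *ᵥ colv R k hk.le ⟨k, hk⟩)

/- ### Auxiliary lemmas -/

lemma sum_castLE {n m : ℕ} (h : m ≤ n) (g : Fin n → ℝ)
    (hg : ∀ i : Fin n, m ≤ (i:ℕ) → g i = 0) :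
    ∑ i, g i = ∑ i : Fin m, g (Fin.castLE h i) := by
  classical
  have h2 : ∑ i ∈ Finset.univ.map (Fin.castLEEmb h), g i
      = ∑ i : Fin m, g (Fin.castLE h i) := by
    rw [Finset.sum_map]; rfl
  rw [← h2]
  symm
  apply Finset.sum_subset (Finset.subset_univ _)
  intro i _ hi
  apply hg
  by_contra hlt
  push_neg at hlt
  exact hi (Finset.mem_map.mpr ⟨⟨i, hlt⟩, Finset.mem_univ _, rfl⟩)

lemma lead_posDef {n : ℕ} {R : Matrix (Fin n) (Fin n) ℝ} (hR : R.PosDef)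
    (m : ℕ) (h : m ≤ n) : (lead R m h).PosDef := by
  rw [Matrix.posDef_iff_dotProduct_mulVec]
  constructor
  · exact hR.1.submatrix _
  · intro x hx
    set y : Fin n → ℝ := fun i => if hi : (i:ℕ) < m then x ⟨i, hi⟩ else 0 with hy
    have hyz : ∀ i : Fin n, m ≤ (i:ℕ) → y i = 0 := by
      intro i hi; simp [hy, Nat.not_lt.mpr hi]
    have hyc : ∀ i : Fin m, y (Fin.castLE h i) = x i := by
      intro i; simp [hy, i.isLt]
    have hyne : y ≠ 0 := by
      obtain ⟨i, hi⟩ := Function.ne_iff.mp hx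
      apply Function.ne_iff.mpr ⟨Fin.castLE h i, ?_⟩
      rw [hyc]; simpa using hi
    have key : star x ⬝ᵥ (lead R m h) *ᵥ x = star y ⬝ᵥ R *ᵥ y := by
      simp only [star_trivial, dotProduct, mulVec]
      rw [sum_castLE h _ (fun i hi => by rw [hyz i hi]; ring)]
      refine Finset.sum_congr rfl fun p _ => ?_
      rw [hyc]
      congr 1
      rw [sum_castLE h _ (fun i hi => by rw [hyz i hi]; ring)]
      refine Finset.sum_congr rfl fun q _ => ?_
      rw [hyc]
      rfl
    rw [key]
    exact hR.dotProduct_mulVec_pos hyne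

/-- The quadratic form `colv j ⬝ A⁻¹ colv l`. -/
noncomputable def qf {n : ℕ} (R : Matrix (Fin n) (Fin n) ℝ) (k : ℕ) (h : k ≤ n)
    (j l : Fin n) : ℝ :=
  colv R k h j ⬝ᵥ (lead R k h)⁻¹ *ᵥ colv R k h l

lemma lead_inv_symm {n : ℕ} {R : Matrix (Fin n) (Fin n) ℝ} (hR : R.PosDef)
    (k : ℕ) (h : k ≤ n) : ((lead R k h)⁻¹)ᵀ = (lead R k h)⁻¹ := by
  rw [Matrix.transpose_nonsing_inv]
  congr 1
  have := (lead_posDef hR k h).1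
  rw [Matrix.IsHermitian, Matrix.conjTranspose_eq_transpose_of_trivial] at this
  exact this

lemma qf_symm {n : ℕ} {R : Matrix (Fin n) (Fin n) ℝ} (hR : R.PosDef)
    (k : ℕ) (h : k ≤ n) (j l : Fin n) : qf R k h j l = qf R k h l j := by
  unfold qf
  rw [Matrix.dotProduct_mulVec, ← Matrix.mulVec_transpose, lead_inv_symm hR,
    dotProduct_comm]

lemma lead_succ_mulVec_castSucc {n : ℕ} {R : Matrix (Fin n) (Fin n) ℝ}
    (k : ℕ) (hk : k < n) (w : Fin (k+1) → ℝ) (q : Fin k) :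
    (lead R (k+1) (Nat.succ_le_of_lt hk) *ᵥ w) (Fin.castSucc q)
      = (lead R k hk.le *ᵥ (fun i => w (Fin.castSucc i))) q
        + colv R k hk.le ⟨k, hk⟩ q * w (Fin.last k) := by
  simp [mulVec, dotProduct, Fin.sum_univ_castSucc]
  rfl

lemma lead_succ_mulVec_last {n : ℕ} {R : Matrix (Fin n) (Fin n) ℝ}
    (k : ℕ) (hk : k < n) (w : Fin (k+1) → ℝ) :
    (lead R (k+1) (Nat.succ_le_of_lt hk) *ᵥ w) (Fin.last k)
      = (∑ i : Fin k, R ⟨k, hk⟩ (Fin.castLE hk.le i) * w (Fin.castSucc i))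
        + R ⟨k, hk⟩ ⟨k, hk⟩ * w (Fin.last k) := by
  simp [mulVec, dotProduct, Fin.sum_univ_castSucc]
  rfl

lemma colv_succ_dot {n : ℕ} {R : Matrix (Fin n) (Fin n) ℝ}
    (k : ℕ) (hk : k < n) (j : Fin n) (x : Fin (k+1) → ℝ) :
    colv R (k+1) (Nat.succ_le_of_lt hk) j ⬝ᵥ x
      = colv R k hk.le j ⬝ᵥ (fun i => x (Fin.castSucc i)) + R ⟨k, hk⟩ j * x (Fin.last k) := by
  simp [dotProduct, Fin.sum_univ_castSucc]
  rfl

lemma schur_pos {n : ℕ} {R : Matrix (Fin n) (Fin n) ℝ} (hR : R.PosDef)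
    (hdiag : ∀ k, R k k = 1) (k : ℕ) (hk : k < n) :
    0 < 1 - qf R k hk.le ⟨k, hk⟩ ⟨k, hk⟩ := by
  have hdet : (lead R k hk.le).det ≠ 0 := (lead_posDef hR k hk.le).det_pos.ne'
  set A := lead R k hk.le with hA
  set ck := colv R k hk.le ⟨k, hk⟩ with hck
  set u : Fin k → ℝ := A⁻¹ *ᵥ ck with hu
  have hmul : A *ᵥ u = ck := by
    rw [hu, Matrix.mulVec_mulVec, Matrix.mul_nonsing_inv _ (isUnit_iff_ne_zero.mpr hdet),
      Matrix.one_mulVec]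
  set v : Fin (k+1) → ℝ := fun p => Fin.lastCases 1 (fun q => -u q) p with hv
  have hvlast : v (Fin.last k) = 1 := by simp [hv]
  have hvcast : ∀ q : Fin k, v (Fin.castSucc q) = -u q := by
    intro q; simp [hv]
  have hvne : v ≠ 0 := by
    intro h0
    have := congrFun h0 (Fin.last k)
    rw [hvlast] at this; simp at this
  have h1 : ∀ q : Fin k, (lead R (k+1) (Nat.succ_le_of_lt hk) *ᵥ v) (Fin.castSucc q) = 0 := by
    intro q
    rw [lead_succ_mulVec_castSucc k hk v q]
    have : (fun i => v (Fin.castSucc i)) = -u := by funext i; rw [hvcast]; rfl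
    rw [this, hvlast, Matrix.mulVec_neg, hmul]
    simp [hck]
  have h2 : (lead R (k+1) (Nat.succ_le_of_lt hk) *ᵥ v) (Fin.last k)
      = 1 - qf R k hk.le ⟨k, hk⟩ ⟨k, hk⟩ := by
    rw [lead_succ_mulVec_last k hk v, hvlast, hdiag]
    have hsym : ∀ i : Fin k, R ⟨k, hk⟩ (Fin.castLE hk.le i) = ck i := by
      intro i
      have h3 := congrFun (congrFun hR.1 ⟨k, hk⟩) (Fin.castLE hk.le i)
      simpa [Matrix.conjTranspose, Matrix.transpose, hck, colv] using h3.symm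
    have : ∑ i : Fin k, R ⟨k, hk⟩ (Fin.castLE hk.le i) * v (Fin.castSucc i)
        = -(ck ⬝ᵥ u) := by
      simp only [dotProduct, ← Finset.sum_neg_distrib]
      refine Finset.sum_congr rfl fun i _ => ?_
      rw [hsym, hvcast]; ring
    rw [this]
    unfold qf
    ring
  have hq : star v ⬝ᵥ (lead R (k+1) (Nat.succ_le_of_lt hk)) *ᵥ v
      = 1 - qf R k hk.le ⟨k, hk⟩ ⟨k, hk⟩ := by
    simp only [star_trivial, dotProduct]
    rw [Fin.sum_univ_castSucc]
    have : ∀ q : Fin k, v (Fin.castSucc q) *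
        (lead R (k+1) (Nat.succ_le_of_lt hk) *ᵥ v) (Fin.castSucc q) = 0 := by
      intro q; rw [h1]; ring
    rw [Finset.sum_congr rfl (fun q _ => this q), Finset.sum_const, h2, hvlast]
    simp
  have := (lead_posDef hR (k+1) (Nat.succ_le_of_lt hk)).dotProduct_mulVec_pos hvne
  rwa [hq] at this

lemma qf_succ {n : ℕ} {R : Matrix (Fin n) (Fin n) ℝ} (hR : R.PosDef)
    (hdiag : ∀ k, R k k = 1) (k : ℕ) (hk : k < n) (j l : Fin n) :
    qf R (k+1) (Nat.succ_le_of_lt hk) j l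
      = qf R k hk.le j l
        + (R ⟨k, hk⟩ j - qf R k hk.le j ⟨k, hk⟩)
          * (R ⟨k, hk⟩ l - qf R k hk.le ⟨k, hk⟩ l)
          / (1 - qf R k hk.le ⟨k, hk⟩ ⟨k, hk⟩) := by
  have hs := schur_pos hR hdiag k hk
  set s := 1 - qf R k hk.le ⟨k, hk⟩ ⟨k, hk⟩ with hsdef
  have hdet : (lead R k hk.le).det ≠ 0 := (lead_posDef hR k hk.le).det_pos.ne'
  have hdet' : (lead R (k+1) (Nat.succ_le_of_lt hk)).det ≠ 0 :=
    (lead_posDef hR (k+1) (Nat.succ_le_of_lt hk)).det_pos.ne'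
  set A := lead R k hk.le with hA
  set ck := colv R k hk.le ⟨k, hk⟩ with hck
  set cl := colv R k hk.le l with hcl
  set β : ℝ := (R ⟨k, hk⟩ l - qf R k hk.le ⟨k, hk⟩ l) / s with hβ
  set u : Fin k → ℝ := A⁻¹ *ᵥ cl - β • (A⁻¹ *ᵥ ck) with hu
  set w : Fin (k+1) → ℝ := fun p => Fin.lastCases β (fun q => u q) p with hw
  have hwlast : w (Fin.last k) = β := by simp [hw]
  have hwcast : ∀ q : Fin k, w (Fin.castSucc q) = u q := by intro q; simp [hw]
  have hwc : (fun i => w (Fin.castSucc i)) = u := funext hwcast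
  have hAinv : A * A⁻¹ = 1 := Matrix.mul_nonsing_inv _ (isUnit_iff_ne_zero.mpr hdet)
  have hmulck : A *ᵥ (A⁻¹ *ᵥ ck) = ck := by
    rw [Matrix.mulVec_mulVec, hAinv, Matrix.one_mulVec]
  have hmulcl : A *ᵥ (A⁻¹ *ᵥ cl) = cl := by
    rw [Matrix.mulVec_mulVec, hAinv, Matrix.one_mulVec]
  have hsymk : ∀ i : Fin k, R ⟨k, hk⟩ (Fin.castLE hk.le i) = ck i := by
    intro i
    have h3 := congrFun (congrFun hR.1 ⟨k, hk⟩) (Fin.castLE hk.le i)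
    simpa [Matrix.conjTranspose, Matrix.transpose, hck, colv] using h3.symm
  have hAw : lead R (k+1) (Nat.succ_le_of_lt hk) *ᵥ w
      = colv R (k+1) (Nat.succ_le_of_lt hk) l := by
    funext p
    refine Fin.lastCases ?_ ?_ p
    · rw [lead_succ_mulVec_last k hk w, hwlast, hdiag]
      have e1 : ∑ i : Fin k, R ⟨k, hk⟩ (Fin.castLE hk.le i) * w (Fin.castSucc i)
          = ck ⬝ᵥ u := by
        refine Finset.sum_congr rfl fun i _ => ?_
        rw [hsymk, hwcast]
      rw [e1]
      have e2 : ck ⬝ᵥ u = qf R k hk.le ⟨k, hk⟩ l - β * qf R k hk.le ⟨k, hk⟩ ⟨k, hk⟩ := by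
        rw [hu, dotProduct_sub, dotProduct_smul]
        unfold qf
        simp [smul_eq_mul]
        rfl
      rw [e2]
      have : colv R (k+1) (Nat.succ_le_of_lt hk) l (Fin.last k) = R ⟨k, hk⟩ l := rfl
      rw [this, hβ]
      field_simp
      ring
    · intro q
      rw [lead_succ_mulVec_castSucc k hk w q, hwc, hwlast]
      have e3 : A *ᵥ u = cl - β • ck := by
        rw [hu, Matrix.mulVec_sub, Matrix.mulVec_smul, hmulck, hmulcl]
      rw [e3]
      have : colv R (k+1) (Nat.succ_le_of_lt hk) l (Fin.castSucc q) = cl q := rfl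
      rw [this]
      simp [smul_eq_mul]
      ring
  have hinvw : (lead R (k+1) (Nat.succ_le_of_lt hk))⁻¹
      *ᵥ colv R (k+1) (Nat.succ_le_of_lt hk) l = w := by
    rw [← hAw, Matrix.mulVec_mulVec,
      Matrix.nonsing_inv_mul _ (isUnit_iff_ne_zero.mpr hdet'), Matrix.one_mulVec]
  show colv R (k+1) (Nat.succ_le_of_lt hk) j ⬝ᵥ _ *ᵥ _ = _
  rw [hinvw, colv_succ_dot k hk j w, hwc, hwlast]
  have e4 : colv R k hk.le j ⬝ᵥ u
      = qf R k hk.le j l - β * qf R k hk.le j ⟨k, hk⟩ := by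
    rw [hu, dotProduct_sub, dotProduct_smul]
    unfold qf
    simp [smul_eq_mul]
    rfl
  rw [e4, hβ]
  field_simp
  ring

lemma spc_eq {n : ℕ} (R : Matrix (Fin n) (Fin n) ℝ) (k : ℕ) (hk : k < n) (j : Fin n) :
    spc R k hk j = (R ⟨k, hk⟩ j - qf R k hk.le j ⟨k, hk⟩)
      / Real.sqrt (1 - qf R k hk.le ⟨k, hk⟩ ⟨k, hk⟩) := rfl

lemma key_sum {n : ℕ} {R : Matrix (Fin n) (Fin n) ℝ} (hR : R.PosDef)
    (hdiag : ∀ k, R k k = 1) :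
    ∀ (k : ℕ) (hk : k ≤ n) (j l : Fin n),
      ∑ i : Fin k, spc R i (lt_of_lt_of_le i.isLt hk) j
          * spc R i (lt_of_lt_of_le i.isLt hk) l = qf R k hk j l := by
  intro k
  induction k with
  | zero => intro hk j l; simp [qf, dotProduct]
  | succ k ih =>
    intro hk1 j l
    have hk : k < n := hk1
    rw [Fin.sum_univ_castSucc]
    have e1 : ∑ i : Fin k,
        spc R (Fin.castSucc i) (lt_of_lt_of_le (Fin.castSucc i).isLt hk1) j
          * spc R (Fin.castSucc i) (lt_of_lt_of_le (Fin.castSucc i).isLt hk1) l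
        = qf R k hk.le j l := by
      rw [← ih hk.le j l]
      exact Finset.sum_congr rfl fun i _ => rfl
    rw [e1]
    have hs := schur_pos hR hdiag k hk
    have hss : Real.sqrt (1 - qf R k hk.le ⟨k, hk⟩ ⟨k, hk⟩)
        * Real.sqrt (1 - qf R k hk.le ⟨k, hk⟩ ⟨k, hk⟩)
        = 1 - qf R k hk.le ⟨k, hk⟩ ⟨k, hk⟩ := Real.mul_self_sqrt hs.le
    have e2 : spc R (Fin.last k) (lt_of_lt_of_le (Fin.last k).isLt hk1) j
          * spc R (Fin.last k) (lt_of_lt_of_le (Fin.last k).isLt hk1) l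
        = (R ⟨k, hk⟩ j - qf R k hk.le j ⟨k, hk⟩)
          * (R ⟨k, hk⟩ l - qf R k hk.le ⟨k, hk⟩ l)
          / (1 - qf R k hk.le ⟨k, hk⟩ ⟨k, hk⟩) := by
      have hj := spc_eq R k hk j
      have hl := spc_eq R k hk l
      have h4 : spc R (Fin.last k) (lt_of_lt_of_le (Fin.last k).isLt hk1) j
          = spc R k hk j := rfl
      rw [h4]
      have h5 : spc R (Fin.last k) (lt_of_lt_of_le (Fin.last k).isLt hk1) l
          = spc R k hk l := rfl
      rw [h5, hj, hl, div_mul_div_comm, hss, qf_symm hR k hk.le ⟨k, hk⟩ l]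
    rw [e2]
    have h6 : qf R (k+1) hk1 j l = qf R (k+1) (Nat.succ_le_of_lt hk) j l := rfl
    rw [h6, qf_succ hR hdiag k hk j l]

/-- First parametrization of the Cholesky factor: the lower-triangular matrix
whose nonzero entries are the semi-partial correlations `L_{ji} = ρ_{ij(1,…,i−1)}`
(0-indexed: `L j i = spc R i j` for `i ≤ j`) satisfies `L Lᵀ = R`. -/
theorem stmt5 {n : ℕ} (R : Matrix (Fin n) (Fin n) ℝ) (hR : R.PosDef)
    (hdiag : ∀ k, R k k = 1) (L : Matrix (Fin n) (Fin n) ℝ)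
    (hL : ∀ j i : Fin n, L j i = if (i : ℕ) ≤ (j : ℕ) then spc R i i.isLt j else 0) :
    L * Lᵀ = R := by
  have hsym : ∀ a b : Fin n, R a b = R b a := by
    intro a b
    have h3 := congrFun (congrFun hR.1 a) b
    simpa [Matrix.conjTranspose, Matrix.transpose] using h3.symm
  have main : ∀ j l : Fin n, (l : ℕ) ≤ (j : ℕ) → (L * Lᵀ) j l = R j l := by
    intro j l hle
    rw [Matrix.mul_apply]
    simp only [Matrix.transpose_apply]
    have hl1 : (l : ℕ) + 1 ≤ n := l.isLt
    have hl : (l : ℕ) < n := l.isLt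
    have hzero : ∀ i : Fin n, (l : ℕ) + 1 ≤ (i : ℕ) → L j i * L l i = 0 := by
      intro i hi
      rw [hL l i, if_neg (by omega)]
      ring
    rw [sum_castLE hl1 _ hzero]
    have e1 : ∀ i : Fin ((l : ℕ) + 1),
        L j (Fin.castLE hl1 i) * L l (Fin.castLE hl1 i)
          = spc R i (lt_of_lt_of_le i.isLt hl1) j
            * spc R i (lt_of_lt_of_le i.isLt hl1) l := by
      intro i
      have hi : (↑(Fin.castLE hl1 i) : ℕ) ≤ (l : ℕ) := Nat.lt_succ_iff.mp i.isLt
      rw [hL j _, hL l _, if_pos (hi.trans hle), if_pos hi]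
      rfl
    rw [Finset.sum_congr rfl fun i _ => e1 i, Fin.sum_univ_castSucc]
    have e2 : ∑ i : Fin (l : ℕ),
        spc R (Fin.castSucc i) (lt_of_lt_of_le (Fin.castSucc i).isLt hl1) j
          * spc R (Fin.castSucc i) (lt_of_lt_of_le (Fin.castSucc i).isLt hl1) l
        = qf R (l : ℕ) hl.le j l := by
      rw [← key_sum hR hdiag (l : ℕ) hl.le j l]
      exact Finset.sum_congr rfl fun i _ => rfl
    rw [e2]
    have hs := schur_pos hR hdiag (l : ℕ) hl
    have hss := Real.mul_self_sqrt hs.le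
    have hRll : R ⟨(l : ℕ), hl⟩ l = 1 := hdiag l
    have e3 : spc R (Fin.last (l : ℕ)) (lt_of_lt_of_le (Fin.last (l : ℕ)).isLt hl1) j
        = spc R (l : ℕ) hl j := rfl
    have e4 : spc R (Fin.last (l : ℕ)) (lt_of_lt_of_le (Fin.last (l : ℕ)).isLt hl1) l
        = spc R (l : ℕ) hl l := rfl
    rw [e3, e4, spc_eq, spc_eq, hRll]
    have hql : qf R (l : ℕ) hl.le l ⟨(l : ℕ), hl⟩ = qf R (l : ℕ) hl.le ⟨(l : ℕ), hl⟩ ⟨(l : ℕ), hl⟩ := rfl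
    have hqj : qf R (l : ℕ) hl.le j ⟨(l : ℕ), hl⟩ = qf R (l : ℕ) hl.le j l := rfl
    rw [hql, hqj]
    have hRlj : R ⟨(l : ℕ), hl⟩ j = R j l := by
      have : R ⟨(l : ℕ), hl⟩ j = R l j := rfl
      rw [this, hsym]
    rw [hRlj]
    set s := 1 - qf R (l : ℕ) hl.le ⟨(l : ℕ), hl⟩ ⟨(l : ℕ), hl⟩ with hsdef
    have hsne : Real.sqrt s ≠ 0 := ne_of_gt (Real.sqrt_pos.mpr hs)
    field_simp
    rw [Real.sq_sqrt hs.le]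
    ring
  ext j l
  rcases le_total (l : ℕ) (j : ℕ) with h | h
  · exact main j l h
  · have h1 := main l j h
    have h2 : (L * Lᵀ) j l = (L * Lᵀ) l j := by
      rw [Matrix.mul_apply, Matrix.mul_apply]
      exact Finset.sum_congr rfl fun i _ => by
        rw [Matrix.transpose_apply, Matrix.transpose_apply]; ring
    rw [h2, h1, hsym]
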